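/- Let n = 3, let h satisfy hypotheses (H), and let k ≥ 0 be an integer. Then the Steklov spectral gap satisfies σ_(k+1)(g_h) − σ_(k)(g_h) < R(λ_(k+1) − λ_(k))/h(0)², where λ_(k) = k(k+1) and σ_(0)(g_h) = 0. -/

import Mathlib

open MeasureTheory Set

/-- Hypotheses (H): `h` is smooth on `[0,R]`, positive on `[0,R)`, `h(R)=0`,
`h'(R) = -1`, and all even-order derivatives of `h` vanish at `R`. -/
def SatisfiesH (R : ℝ) (h : ℝ → ℝ) : Prop :=
  ContDiffOn ℝ (⊤ : ℕ∞) h (Set.Icc 0 R) ∧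
  (∀ r ∈ Set.Ico (0:ℝ) R, 0 < h r) ∧
  h R = 0 ∧
  derivWithin h (Set.Icc 0 R) R = -1 ∧
  ∀ k : ℕ, iteratedDerivWithin (2 * k) h (Set.Icc 0 R) R = 0

/-- The `k`-th distinct eigenvalue `λ_(k) = k (n + k - 2)` of the Laplacian on the
round unit sphere `S^{n-1}`. -/
noncomputable def sphereEig (n k : ℕ) : ℝ := (k : ℝ) * ((n : ℝ) + (k : ℝ) - 2)

/-- The Rayleigh quotient
`R_λ(a; h) = (∫₀^R ((a')² h^{n-1} + λ a² h^{n-3}))/(a(0)² h(0)^{n-1})`. -/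
noncomputable def rayleighQ (R : ℝ) (n : ℕ) (lam : ℝ) (h a : ℝ → ℝ) : ℝ :=
  (∫ r in (0:ℝ)..R,
      (deriv a r) ^ 2 * h r ^ ((n : ℤ) - 1) + lam * (a r) ^ 2 * h r ^ ((n : ℤ) - 3)) /
    ((a 0) ^ 2 * h 0 ^ ((n : ℤ) - 1))

/-- Admissible test functions: Lipschitz on `[0,R]`, vanishing at `R`, nonzero at `0`. -/
def IsAdmissible (R : ℝ) (a : ℝ → ℝ) : Prop :=
  (∃ K : NNReal, LipschitzOnWith K a (Set.Icc 0 R)) ∧ a R = 0 ∧ a 0 ≠ 0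

/-- The `k`-th distinct Steklov eigenvalue of the ball `[0,R] × S^{n-1}` with the
revolution metric `g_h`, characterized variationally. -/
noncomputable def steklov (R : ℝ) (n k : ℕ) (h : ℝ → ℝ) : ℝ :=
  sInf { v : ℝ | ∃ a : ℝ → ℝ, IsAdmissible R a ∧ v = rayleighQ R n (sphereEig n k) h a }

/-- `a` is a minimizer realizing `σ_(k)(g_h)`. -/
def IsMinimizer (R : ℝ) (n k : ℕ) (h a : ℝ → ℝ) : Prop :=
  IsAdmissible R a ∧ rayleighQ R n (sphereEig n k) h a = steklov R n k h

lemma abs_deriv_le_of_lipschitzOn {f : ℝ → ℝ} {s : Set ℝ} {x : ℝ} (hs : s ∈ nhds x)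
    {L : NNReal} (hf : LipschitzOnWith L f s) : |deriv f x| ≤ L := by
  have h1 : ‖fderiv ℝ f x‖ ≤ L := norm_fderiv_le_of_lipschitzOn ℝ hs hf
  calc |deriv f x| = ‖(fderiv ℝ f x : ℝ → ℝ) 1‖ := by rw [fderiv_apply_one_eq_deriv, Real.norm_eq_abs]
    _ ≤ ‖fderiv ℝ f x‖ * ‖(1:ℝ)‖ := ContinuousLinearMap.le_opNorm _ _
    _ = ‖fderiv ℝ f x‖ := by simp
    _ ≤ L := h1

lemma abs_deriv_le_of_lipschitz {f : ℝ → ℝ} {x : ℝ} {L : NNReal} (hf : LipschitzWith L f) :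
    |deriv f x| ≤ L :=
  abs_deriv_le_of_lipschitzOn Filter.univ_mem (lipschitzOnWith_univ.2 hf)

lemma lipschitzWith_affine (p q : ℝ) : LipschitzWith ‖q‖₊ (fun x : ℝ => p + q * x) :=
  LipschitzWith.of_dist_le_mul fun x y => by
    simp only [Real.dist_eq]
    have h1 : p + q * x - (p + q * y) = q * (x - y) := by ring
    rw [h1, abs_mul]
    have h2 : (‖q‖₊ : ℝ) = |q| := by rw [coe_nnnorm, Real.norm_eq_abs]
    rw [h2]

lemma rayleighQ_three (R lam : ℝ) (h a : ℝ → ℝ) :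
    rayleighQ R 3 lam h a =
      (∫ r in (0:ℝ)..R, (deriv a r)^2 * (h r)^2 + lam * (a r)^2) / ((a 0)^2 * (h 0)^2) := by
  unfold rayleighQ
  simp only [show ((3:ℕ):ℤ) - 1 = 2 by norm_num, show ((3:ℕ):ℤ) - 3 = 0 by norm_num,
    zpow_zero, mul_one, show (2:ℤ) = ((2:ℕ):ℤ) from rfl, zpow_natCast]

lemma integral_piece_le {F : ℝ → ℝ} {u v B : ℝ} (huv : u ≤ v)
    (hint : IntervalIntegrable F volume u v) (hbd : ∀ r ∈ Ioo u v, F r ≤ B) :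
    ∫ r in u..v, F r ≤ B * (v - u) := by
  have h1 : ∫ r in u..v, F r ≤ ∫ _r in u..v, B := by
    refine intervalIntegral.integral_mono_ae_restrict huv hint intervalIntegrable_const ?_
    rw [show volume.restrict (Icc u v) = volume.restrict (Ioo u v) from
      (Measure.restrict_congr_set Ioo_ae_eq_Icc).symm]
    exact (ae_restrict_iff' measurableSet_Ioo).2 (Filter.Eventually.of_forall hbd)
  simpa [intervalIntegral.integral_const, smul_eq_mul, mul_comm] using h1

lemma intervalIntegrable_energy {R C B : ℝ} (hR : 0 ≤ R) {h : ℝ → ℝ}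
    (hcont : ContinuousOn h (Icc 0 R)) (hC : ∀ r ∈ Icc 0 R, |h r| ≤ C) {a : ℝ → ℝ}
    (hder : ∀ r ∈ Ioo 0 R, |deriv a r| ≤ B) :
    IntervalIntegrable (fun r => (deriv a r)^2 * (h r)^2) volume 0 R := by
  rw [intervalIntegrable_iff_integrableOn_Ioc_of_le hR]
  have hmeas : AEMeasurable h (volume.restrict (Ioc 0 R)) :=
    (hcont.mono Ioc_subset_Icc_self).aemeasurable measurableSet_Ioc
  have hmeasF : AEStronglyMeasurable (fun r => (deriv a r)^2 * (h r)^2)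
      (volume.restrict (Ioc 0 R)) :=
    (((measurable_deriv a).pow_const 2).aemeasurable.mul (hmeas.pow_const 2)).aestronglyMeasurable
  refine Integrable.mono' (g := fun _ => B^2 * C^2)
    (integrableOn_const measure_Ioc_lt_top.ne) hmeasF ?_
  rw [show volume.restrict (Ioc 0 R) = volume.restrict (Ioo 0 R) from
    (Measure.restrict_congr_set Ioo_ae_eq_Ioc).symm]
  refine (ae_restrict_iff' measurableSet_Ioo).2 (Filter.Eventually.of_forall ?_)
  intro r hr
  have h1 : |deriv a r| ≤ B := hder r hr
  have h2 : |h r| ≤ C := hC r (Ioo_subset_Icc_self hr)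
  have e1 : (deriv a r)^2 ≤ B^2 := by nlinarith [abs_nonneg (deriv a r), sq_abs (deriv a r)]
  have e2 : (h r)^2 ≤ C^2 := by nlinarith [abs_nonneg (h r), sq_abs (h r)]
  have : ‖(deriv a r)^2 * (h r)^2‖ = (deriv a r)^2 * (h r)^2 := by
    rw [Real.norm_eq_abs, abs_of_nonneg (by positivity)]
  rw [this]
  exact mul_le_mul e1 e2 (sq_nonneg _) (by positivity)

lemma sphereEig_nonneg (k : ℕ) : 0 ≤ sphereEig 3 k := by
  unfold sphereEig
  have h1 : ((3:ℕ):ℝ) + (k:ℝ) - 2 = (k:ℝ) + 1 := by push_cast; ring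
  rw [h1]
  positivity

lemma rayleighQ_nonneg {R : ℝ} (hR : 0 ≤ R) {lam : ℝ} (hlam : 0 ≤ lam) (h a : ℝ → ℝ) :
    0 ≤ rayleighQ R 3 lam h a := by
  rw [rayleighQ_three]
  apply div_nonneg
  · apply intervalIntegral.integral_nonneg hR
    intro u _
    positivity
  · positivity

lemma steklov_set_bddBelow {R : ℝ} (hR : 0 ≤ R) (h : ℝ → ℝ) {lam : ℝ} (hlam : 0 ≤ lam) :
    BddBelow {v : ℝ | ∃ a : ℝ → ℝ, IsAdmissible R a ∧ v = rayleighQ R 3 lam h a} := by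
  refine ⟨0, ?_⟩
  rintro v ⟨a, -, rfl⟩
  exact rayleighQ_nonneg hR hlam h a

lemma steklov_set_nonempty {R : ℝ} (hR : 0 < R) (h : ℝ → ℝ) (lam : ℝ) :
    {v : ℝ | ∃ a : ℝ → ℝ, IsAdmissible R a ∧ v = rayleighQ R 3 lam h a}.Nonempty := by
  refine ⟨_, fun r => R + (-1) * r, ⟨⟨_, (lipschitzWith_affine R (-1)).lipschitzOnWith⟩, ?_, ?_⟩, rfl⟩
  · ring
  · norm_num
    exact hR.ne'

lemma rayleigh_decomp {R : ℝ} (hR : 0 < R) {h : ℝ → ℝ} {C : ℝ}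
    (hcont : ContinuousOn h (Icc 0 R)) (hC : ∀ r ∈ Icc 0 R, |h r| ≤ C)
    {a : ℝ → ℝ} {K : NNReal} (hK : LipschitzOnWith K a (Icc 0 R)) (lam : ℝ) :
    ∫ r in (0:ℝ)..R, ((deriv a r)^2 * (h r)^2 + lam * (a r)^2) =
      (∫ r in (0:ℝ)..R, (deriv a r)^2 * (h r)^2) + lam * (∫ r in (0:ℝ)..R, (a r)^2) := by
  have hder : ∀ r ∈ Ioo (0:ℝ) R, |deriv a r| ≤ (K:ℝ) := fun r hr =>
    abs_deriv_le_of_lipschitzOn (Icc_mem_nhds hr.1 hr.2) hK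
  have intE := intervalIntegrable_energy hR.le hcont hC hder
  have intA : IntervalIntegrable (fun r => (a r)^2) volume 0 R := by
    apply ContinuousOn.intervalIntegrable
    rw [uIcc_of_le hR.le]
    exact hK.continuousOn.pow 2
  rw [intervalIntegral.integral_add intE (intA.const_mul lam),
    intervalIntegral.integral_const_mul]

set_option maxHeartbeats 2000000 in
lemma steklov_lt_main {R : ℝ} (hR : 0 < R) {h : ℝ → ℝ} (hH : SatisfiesH R h)
    {lam : ℝ} (hlam : 2 ≤ lam) :
    sInf {v : ℝ | ∃ a : ℝ → ℝ, IsAdmissible R a ∧ v = rayleighQ R 3 lam h a} <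
      lam * R / (h 0)^2 := by
  obtain ⟨hsm, hpos, hR0, -, -⟩ := hH
  have hlam0 : (0:ℝ) < lam := by linarith
  have h0pos : 0 < h 0 := hpos 0 ⟨le_rfl, hR⟩
  have hcont : ContinuousOn h (Icc 0 R) := hsm.continuousOn
  have hnn : ∀ r ∈ Icc 0 R, 0 ≤ h r := by
    intro r hr
    rcases eq_or_lt_of_le hr.2 with he | hlt
    · rw [he, hR0]
    · exact (hpos r ⟨hr.1, hlt⟩).le
  obtain ⟨C, hC1, hC⟩ : ∃ C : ℝ, 1 ≤ C ∧ ∀ r ∈ Icc 0 R, |h r| ≤ C := by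
    obtain ⟨C0, hC0⟩ := isCompact_Icc.exists_bound_of_continuousOn hcont
    refine ⟨max C0 1, le_max_right _ _, fun r hr => ?_⟩
    rw [← Real.norm_eq_abs]
    exact (hC0 r hr).trans (le_max_left _ _)
  have hCpos : (0:ℝ) < C := by linarith
  -- linear bound near R
  obtain ⟨K, hK1, hlin⟩ : ∃ K : ℝ, 1 ≤ K ∧ ∀ r ∈ Icc 0 R, h r ≤ K * (R - r) := by
    have hdiff : DifferentiableOn ℝ h (Icc 0 R) := hsm.differentiableOn (by norm_num)
    have hdc : ContinuousOn (fun r => derivWithin h (Icc 0 R) r) (Icc 0 R) :=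
      hsm.continuousOn_derivWithin (uniqueDiffOn_Icc hR) (by norm_num)
    obtain ⟨K0, hK0⟩ := isCompact_Icc.exists_bound_of_continuousOn hdc
    refine ⟨max K0 1, le_max_right _ _, fun r hr => ?_⟩
    have hbd : ∀ x ∈ Icc 0 R, ‖derivWithin h (Icc 0 R) x‖ ≤ max K0 1 :=
      fun x hx => le_trans (hK0 x hx) (le_max_left _ _)
    have hmvt := Convex.norm_image_sub_le_of_norm_derivWithin_le hdiff hbd (convex_Icc 0 R)
      (right_mem_Icc.2 hR.le) hr
    rw [hR0, Real.norm_eq_abs, Real.norm_eq_abs, sub_zero] at hmvt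
    have h2 : |r - R| = R - r := by
      rw [abs_sub_comm]
      exact abs_of_nonneg (by linarith [hr.2])
    rw [h2] at hmvt
    exact (le_abs_self _).trans hmvt
  have hKpos : (0:ℝ) < K := by linarith
  -- parameters
  obtain ⟨e, he0, he2, heC⟩ : ∃ e : ℝ, 0 < e ∧ e ≤ 1/2 ∧ 16 * C^2 * e ≤ lam * R^2 := by
    refine ⟨min (1/2) (lam * R^2 / (16 * C^2)),
      lt_min (by norm_num) (div_pos (mul_pos hlam0 (pow_pos hR 2))
        (mul_pos (by norm_num) (pow_pos hCpos 2))), min_le_left _ _, ?_⟩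
    have h1 := min_le_right (1/2:ℝ) (lam * R^2 / (16 * C^2))
    rw [le_div_iff₀ (mul_pos (by norm_num : (0:ℝ) < 16) (pow_pos hCpos 2))] at h1
    linarith only [h1]
  obtain ⟨d, hd0, hd8, hdK⟩ : ∃ d : ℝ, 0 < d ∧ d ≤ R/8 ∧ 512 * K^2 * d ≤ e * lam * R := by
    refine ⟨min (R/8) (e * lam * R / (512 * K^2)),
      lt_min (by positivity) (div_pos (mul_pos (mul_pos he0 hlam0) hR)
        (mul_pos (by norm_num) (pow_pos hKpos 2))), min_le_left _ _, ?_⟩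
    have h1 := min_le_right (R/8) (e * lam * R / (512 * K^2))
    rw [le_div_iff₀ (mul_pos (by norm_num : (0:ℝ) < 512) (pow_pos hKpos 2))] at h1
    linarith only [h1]
  set c := 1 - e with hcdef
  set s := 2 * e / R with hsdef
  set m := R - 4 * d with hmdef
  clear_value c s m
  have hc2 : 1/2 ≤ c := by rw [hcdef]; linarith
  have hc1 : c ≤ 1 := by rw [hcdef]; linarith
  have hs0 : 0 < s := by rw [hsdef]; positivity
  have hm2 : R/2 ≤ m := by rw [hmdef]; linarith
  have hmR : m < R := by rw [hmdef]; linarith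
  -- test function
  set f1 : ℝ → ℝ := fun r => 1 + (-s) * r with hf1
  set f3 : ℝ → ℝ := fun r => c * R / d + (-(c/d)) * r with hf3
  set g1 : ℝ → ℝ := fun r => max (f1 r) c with hg1
  set a : ℝ → ℝ := fun r => min (g1 r) (f3 r) with ha
  have hf3eq : ∀ r, f3 r = c * (R - r) / d := by
    intro r; rw [hf3]; ring
  have La : LipschitzWith (max ‖(-s)‖₊ ‖(-(c/d))‖₊) a :=
    ((lipschitzWith_affine 1 (-s)).max_const c).min (lipschitzWith_affine (c*R/d) (-(c/d)))
  have Lg1 : LipschitzWith ‖(-s)‖₊ g1 := (lipschitzWith_affine 1 (-s)).max_const c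
  have hg1lb : ∀ r, c ≤ g1 r := fun r => le_max_right _ _
  have haR : a R = 0 := by
    have h1 : f3 R = 0 := by rw [hf3eq]; simp
    have h2 : (0:ℝ) ≤ g1 R := le_trans (by linarith) (hg1lb R)
    rw [ha]
    simp only [h1]
    exact min_eq_right h2
  have ha0 : a 0 = 1 := by
    have h1 : g1 0 = 1 := by
      rw [hg1, hf1]
      simp only [mul_zero, add_zero]
      exact max_eq_left hc1
    have h2 : (1:ℝ) ≤ f3 0 := by
      rw [hf3eq]
      rw [sub_zero, le_div_iff₀ hd0]
      nlinarith
    rw [ha]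
    simp only [h1]
    exact min_eq_left h2
  have hadm : IsAdmissible R a :=
    ⟨⟨_, La.lipschitzOnWith⟩, haR, by rw [ha0]; norm_num⟩
  have hA1 : ∀ r, 0 ≤ r → a r ≤ 1 := by
    intro r hr
    rw [ha]
    refine (min_le_left _ _).trans ?_
    rw [hg1]
    apply max_le _ hc1
    rw [hf1]
    dsimp only
    linarith only [mul_nonneg hs0.le hr]
  have hsR : s * R = 2 * e := by rw [hsdef]; exact div_mul_cancel₀ _ hR.ne'
  have hA2 : ∀ r, R/2 ≤ r → a r ≤ c := by
    intro r hr
    rw [ha]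
    refine (min_le_left _ _).trans ?_
    rw [hg1]
    apply max_le _ le_rfl
    rw [hf1, hcdef]
    dsimp only
    linarith only [mul_le_mul_of_nonneg_left hr hs0.le, hsR, he0]
  have hA3 : ∀ r, r ≤ R → 0 ≤ a r := by
    intro r hr
    rw [ha]
    apply le_min
    · exact le_trans (by linarith) (hg1lb r)
    · rw [hf3eq r]
      apply div_nonneg _ hd0.le
      exact mul_nonneg (by linarith) (by linarith)
  have hcoe_s : (‖(-s)‖₊ : ℝ) = s := by
    rw [coe_nnnorm, Real.norm_eq_abs, abs_neg, abs_of_pos hs0]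
  have hcd0 : 0 < c/d := div_pos (by linarith) hd0
  have hcoe_cd : (‖(-(c/d))‖₊ : ℝ) = c/d := by
    rw [coe_nnnorm, Real.norm_eq_abs, abs_neg, abs_of_pos hcd0]
  have hDg : ∀ r, |deriv g1 r| ≤ s := by
    intro r
    have := abs_deriv_le_of_lipschitz (x := r) Lg1
    rwa [hcoe_s] at this
  have hscd : s ≤ c/d := by
    rw [hsdef, div_le_div_iff₀ hR hd0]
    have u1 : 0 ≤ (1 - 2*e)*d := mul_nonneg (by linarith) hd0.le
    have u2 : 0 ≤ (c - 1/2)*R := mul_nonneg (by linarith) hR.le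
    linarith only [u1, u2, hd8, hR]
  have hDa : ∀ r, |deriv a r| ≤ c/d := by
    intro r
    have h1 := abs_deriv_le_of_lipschitz (x := r) La
    have h2 : ((max ‖(-s)‖₊ ‖(-(c/d))‖₊ : NNReal) : ℝ) = max s (c/d) := by
      rw [NNReal.coe_max, hcoe_s, hcoe_cd]
    rw [h2, max_eq_right hscd] at h1
    exact h1
  have hD1 : ∀ r ∈ Ioo (-(R/2)) m, deriv a r = deriv g1 r := by
    intro r hr
    have hEq : EqOn a g1 (Ioo (-(R/2)) m) := by
      intro x hx
      rw [ha]
      apply min_eq_left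
      have hx1 : g1 x ≤ 3/2 := by
        rw [hg1]
        apply max_le _ (by linarith)
        rw [hf1]
        dsimp only
        have hh1 : s*(-(R/2)) < s*x := mul_lt_mul_of_pos_left hx.1 hs0
        have hh2 : s*(-(R/2)) = -(s*R)/2 := by ring
        linarith only [hh1, hh2, hsR, he2]
      have hx2 : (2:ℝ) ≤ f3 x := by
        rw [hf3eq x, le_div_iff₀ hd0]
        have hRx : 4*d ≤ R - x := by
          have := hx.2
          rw [hmdef] at this
          linarith
        have hh3 : c*(4*d) ≤ c*(R - x) := mul_le_mul_of_nonneg_left hRx (by linarith)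
        have hh4 : 2*d ≤ c*(4*d) := by
          linarith only [mul_nonneg (by linarith : (0:ℝ) ≤ c - 1/2) hd0.le]
        linarith only [hh3, hh4]
      linarith
    exact Filter.EventuallyEq.deriv_eq (Filter.eventuallyEq_of_mem (isOpen_Ioo.mem_nhds hr) hEq)
  -- the integrand
  set F : ℝ → ℝ := fun r => (deriv a r)^2 * (h r)^2 + lam * (a r)^2 with hF
  have intE : IntervalIntegrable (fun r => (deriv a r)^2 * (h r)^2) volume 0 R :=
    intervalIntegrable_energy hR.le hcont hC (fun r _ => hDa r)
  have contA : Continuous a := La.continuous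
  have intA : IntervalIntegrable (fun r => lam * (a r)^2) volume 0 R :=
    (Continuous.intervalIntegrable (continuous_const.mul (contA.pow 2)) _ _)
  have intF : IntervalIntegrable F volume 0 R := intE.add intA
  have sub1 : uIcc (0:ℝ) (R/2) ⊆ uIcc (0:ℝ) R := by
    rw [uIcc_of_le (by linarith), uIcc_of_le hR.le]
    exact Icc_subset_Icc le_rfl (by linarith)
  have sub2 : uIcc (R/2) m ⊆ uIcc (0:ℝ) R := by
    rw [uIcc_of_le (by linarith), uIcc_of_le hR.le]
    exact Icc_subset_Icc (by linarith) hmR.le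
  have sub3 : uIcc m R ⊆ uIcc (0:ℝ) R := by
    rw [uIcc_of_le hmR.le, uIcc_of_le hR.le]
    exact Icc_subset_Icc (by linarith) le_rfl
  have sub0m : uIcc (0:ℝ) m ⊆ uIcc (0:ℝ) R := by
    rw [uIcc_of_le (by linarith), uIcc_of_le hR.le]
    exact Icc_subset_Icc le_rfl hmR.le
  have i1 := intF.mono_set sub1
  have i2 := intF.mono_set sub2
  have i3 := intF.mono_set sub3
  have i0m := intF.mono_set sub0m
  have hsplit : (∫ r in (0:ℝ)..R, F r) =
      (∫ r in (0:ℝ)..(R/2), F r) + (∫ r in (R/2)..m, F r) + (∫ r in m..R, F r) := by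
    rw [intervalIntegral.integral_add_adjacent_intervals i1 i2,
      intervalIntegral.integral_add_adjacent_intervals i0m i3]
  have hp1 : (∫ r in (0:ℝ)..(R/2), F r) ≤ (s^2*C^2 + lam) * (R/2 - 0) := by
    apply integral_piece_le (by linarith) i1
    intro r hr
    have hrI : r ∈ Icc 0 R := ⟨hr.1.le, by linarith [hr.2]⟩
    have hd1 := hD1 r ⟨by linarith [hr.1], by linarith [hr.2]⟩
    have e1 : (deriv a r)^2 ≤ s^2 := by
      have h5 := hDg r
      rw [← hd1] at h5
      obtain ⟨l, u⟩ := abs_le.mp h5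
      exact sq_le_sq' l u
    have e2 : (h r)^2 ≤ C^2 := by
      obtain ⟨l, u⟩ := abs_le.mp (hC r hrI)
      exact sq_le_sq' l u
    have e3 : (a r)^2 ≤ 1 := by
      have u1 := hA1 r hr.1.le
      have u2 := hA3 r hrI.2
      have := sq_le_sq' (by linarith : -(1:ℝ) ≤ a r) u1
      simpa using this
    have t1 : (deriv a r)^2 * (h r)^2 ≤ s^2 * C^2 :=
      mul_le_mul e1 e2 (sq_nonneg _) (by positivity)
    have t2 : lam * (a r)^2 ≤ lam * 1 := mul_le_mul_of_nonneg_left e3 hlam0.le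
    rw [hF]
    dsimp only
    linarith only [t1, t2]
  have hp2 : (∫ r in (R/2)..m, F r) ≤ (s^2*C^2 + lam*c^2) * (m - R/2) := by
    apply integral_piece_le (by linarith) i2
    intro r hr
    have hrI : r ∈ Icc 0 R := ⟨by linarith [hr.1], by linarith [hr.2, hmR]⟩
    have hd1 := hD1 r ⟨by linarith [hr.1], hr.2⟩
    have e1 : (deriv a r)^2 ≤ s^2 := by
      have h5 := hDg r
      rw [← hd1] at h5
      obtain ⟨l, u⟩ := abs_le.mp h5
      exact sq_le_sq' l u
    have e2 : (h r)^2 ≤ C^2 := by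
      obtain ⟨l, u⟩ := abs_le.mp (hC r hrI)
      exact sq_le_sq' l u
    have e3 : (a r)^2 ≤ c^2 := by
      have u1 := hA2 r hr.1.le
      have u2 := hA3 r hrI.2
      exact sq_le_sq' (by linarith) u1
    have t1 : (deriv a r)^2 * (h r)^2 ≤ s^2 * C^2 :=
      mul_le_mul e1 e2 (sq_nonneg _) (by positivity)
    have t2 : lam * (a r)^2 ≤ lam * c^2 := mul_le_mul_of_nonneg_left e3 hlam0.le
    rw [hF]
    dsimp only
    linarith only [t1, t2]
  have hp3 : (∫ r in m..R, F r) ≤ (16*K^2 + lam*c^2) * (R - m) := by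
    apply integral_piece_le hmR.le i3
    intro r hr
    have hrI : r ∈ Icc 0 R := ⟨by linarith [hr.1], hr.2.le⟩
    have e1 : (deriv a r)^2 ≤ (c/d)^2 := by
      obtain ⟨l, u⟩ := abs_le.mp (hDa r)
      exact sq_le_sq' l u
    have e2 : (h r)^2 ≤ (4*K*d)^2 := by
      have u1 := hlin r hrI
      have u2 := hnn r hrI
      have u3 : K*(R - r) ≤ K*(4*d) := by
        apply mul_le_mul_of_nonneg_left _ hKpos.le
        have := hr.1
        rw [hmdef] at this
        linarith
      have u4 : h r ≤ 4*K*d := by linarith only [u1, u3]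
      have u5 : (0:ℝ) < 4*K*d := mul_pos (mul_pos (by norm_num) hKpos) hd0
      exact sq_le_sq' (by linarith only [u2, u5]) u4
    have e3 : (a r)^2 ≤ c^2 := by
      have u1 := hA2 r (by linarith [hr.1] : R/2 ≤ r)
      have u2 := hA3 r hrI.2
      exact sq_le_sq' (by linarith) u1
    have t1 : (deriv a r)^2 * (h r)^2 ≤ (c/d)^2 * (4*K*d)^2 :=
      mul_le_mul e1 e2 (sq_nonneg _) (by positivity)
    have teq : (c/d)^2 * (4*K*d)^2 = 16*c^2*K^2 := by
      field_simp [hd0.ne']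
      ring
    have t1' : (deriv a r)^2 * (h r)^2 ≤ 16*K^2 := by
      rw [teq] at t1
      have hc2' : c^2 ≤ 1 := by
        have := sq_le_sq' (by linarith : -(1:ℝ) ≤ c) hc1
        simpa using this
      have u6 : 0 ≤ (1 - c^2)*K^2 := mul_nonneg (by linarith) (sq_nonneg K)
      linarith only [t1, u6]
    have t2 : lam * (a r)^2 ≤ lam * c^2 := mul_le_mul_of_nonneg_left e3 hlam0.le
    rw [hF]
    dsimp only
    linarith only [t1', t2]
  have expand : (s^2*C^2 + lam) * (R/2 - 0) + (s^2*C^2 + lam*c^2) * (m - R/2)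
      + (16*K^2 + lam*c^2) * (R - m)
      = s^2*C^2*m + (lam*(R/2) + lam*c^2*(R - R/2)) + 64*K^2*d + (16*K^2 + lam*c^2 - s^2*C^2)*(R - m) - (16*K^2 + lam*c^2 - s^2*C^2)*(4*d) := by
    rw [hmdef]
    ring
  have q1 : s^2*C^2*m ≤ e*lam*R/4 := by
    have h1 : s^2*C^2*m ≤ s^2*C^2*R :=
      mul_le_mul_of_nonneg_left hmR.le (by positivity : (0:ℝ) ≤ s^2*C^2)
    have h2 : s^2*C^2*R = 4*e^2*C^2/R := by
      rw [hsdef]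
      field_simp
      ring
    have h3 : 4*e^2*C^2/R ≤ e*lam*R/4 := by
      rw [div_le_div_iff₀ hR (by norm_num : (0:ℝ) < 4)]
      linarith only [mul_le_mul_of_nonneg_left heC he0.le]
    linarith only [h1, h2, h3]
  have q2 : 64*K^2*d ≤ e*lam*R/8 := by linarith only [hdK]
  have q3 : lam*(R/2) + lam*c^2*(R - R/2) ≤ lam*R - (3/4)*(e*lam*R) := by
    rw [hcdef]
    have u : 0 ≤ (lam*R)*(e*(1/4 - e/2)) :=
      mul_nonneg (mul_pos hlam0 hR).le (mul_nonneg he0.le (by linarith))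
    nlinarith [u]
  have helam : 0 < e*lam*R := mul_pos (mul_pos he0 hlam0) hR
  have hNlt : (∫ r in (0:ℝ)..R, F r) < lam * R := by
    rw [hsplit]
    have hsum := add_le_add (add_le_add hp1 hp2) hp3
    have hRm : R - m = 4*d := by rw [hmdef]; ring
    rw [expand, hRm] at hsum
    have hfin : (∫ r in (0:ℝ)..(R/2), F r) + (∫ r in (R/2)..m, F r) + (∫ r in m..R, F r)
        ≤ s^2*C^2*m + (lam*(R/2) + lam*c^2*(R - R/2)) + 64*K^2*d := by
      linarith only [hsum]
    linarith only [hfin, q1, q2, q3, helam]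
  have hrq : rayleighQ R 3 lam h a < lam * R / (h 0)^2 := by
    have hrqF : rayleighQ R 3 lam h a = (∫ r in (0:ℝ)..R, F r) / (h 0)^2 := by
      rw [rayleighQ_three, ha0, hF]
      norm_num
    rw [hrqF]
    have hden : (0:ℝ) < (h 0)^2 := by positivity
    exact div_lt_div_of_pos_right hNlt hden
  exact lt_of_le_of_lt (csInf_le (steklov_set_bddBelow hR.le h (by linarith)) ⟨a, hadm, rfl⟩) hrq

set_option maxHeartbeats 1000000 in
theorem stmt_6 (R : ℝ) (hR : 0 < R) (h : ℝ → ℝ) (hH : SatisfiesH R h) (k : ℕ) :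
    steklov R 3 (k + 1) h - steklov R 3 k h <
      R * (sphereEig 3 (k + 1) - sphereEig 3 k) / (h 0) ^ 2 := by
  have h0pos : 0 < h 0 := hH.2.1 0 ⟨le_rfl, hR⟩
  have hden : (0:ℝ) < (h 0)^2 := by positivity
  have hcont : ContinuousOn h (Icc 0 R) := hH.1.continuousOn
  obtain ⟨C, hC⟩ : ∃ C, ∀ r ∈ Icc 0 R, |h r| ≤ C := by
    obtain ⟨C0, hC0⟩ := isCompact_Icc.exists_bound_of_continuousOn hcont
    refine ⟨C0, fun r hr => ?_⟩
    rw [← Real.norm_eq_abs]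
    exact hC0 r hr
  have heig : ∀ j : ℕ, sphereEig 3 j = (j:ℝ)*((j:ℝ)+1) := by
    intro j
    unfold sphereEig
    push_cast
    ring
  rcases Nat.eq_zero_or_pos k with hk0 | hkpos
  · subst hk0
    have hσ0 : 0 ≤ steklov R 3 0 h := by
      apply le_csInf (steklov_set_nonempty hR h _)
      rintro v ⟨a, -, rfl⟩
      exact rayleighQ_nonneg hR.le (sphereEig_nonneg 0) h a
    have hσ1 : steklov R 3 1 h < sphereEig 3 1 * R / (h 0)^2 := by
      unfold steklov
      apply steklov_lt_main hR hH
      rw [heig 1]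
      norm_num
    have he1 : sphereEig 3 1 = 2 := by rw [heig 1]; norm_num
    have he0' : sphereEig 3 0 = 0 := by rw [heig 0]; norm_num
    rw [he1] at hσ1
    rw [show (0:ℕ) + 1 = 1 from rfl, he1, he0']
    have hq : R*(2-0)/(h 0)^2 = 2*R/(h 0)^2 := by ring
    rw [hq]
    linarith [hσ1]
  · -- k ≥ 1
    set lam := sphereEig 3 k with hlamdef
    set lam' := sphereEig 3 (k+1) with hlamdef'
    have hk1 : (1:ℝ) ≤ (k:ℝ) := by exact_mod_cast hkpos
    have hlam2 : 2 ≤ lam := by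
      rw [hlamdef, heig]
      nlinarith
    have hlampos : 0 < lam := by linarith
    have hΔpos : 0 < lam' - lam := by
      rw [hlamdef, hlamdef', heig, heig]
      push_cast
      nlinarith
    have hlam'pos : 0 < lam' := by linarith
    set S := {v : ℝ | ∃ a : ℝ → ℝ, IsAdmissible R a ∧ v = rayleighQ R 3 lam h a} with hS
    set S' := {v : ℝ | ∃ a : ℝ → ℝ, IsAdmissible R a ∧ v = rayleighQ R 3 lam' h a} with hS'
    have hσeq : steklov R 3 k h = sInf S := rfl
    have hσeq' : steklov R 3 (k+1) h = sInf S' := rfl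
    have hbdd : BddBelow S := steklov_set_bddBelow hR.le h (by linarith)
    have hbdd' : BddBelow S' := steklov_set_bddBelow hR.le h (by linarith)
    have hne : S.Nonempty := steklov_set_nonempty hR h lam
    have key : sInf S < lam * R / (h 0)^2 := steklov_lt_main hR hH hlam2
    set G := lam * R / (h 0)^2 with hGdef
    set β := G - sInf S with hβdef
    have hβpos : 0 < β := by rw [hβdef]; linarith [key]
    set ε := (lam' - lam) * β / (2 * lam') with hεdef
    have hεpos : 0 < ε := by
      rw [hεdef]
      exact div_pos (mul_pos hΔpos hβpos) (by linarith)
    obtain ⟨v, hvS, hvlt⟩ := exists_lt_of_csInf_lt hne (show sInf S < sInf S + ε by linarith)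
    obtain ⟨a, hadm, rfl⟩ := hvS
    obtain ⟨Ka, hKa⟩ := hadm.1
    have ha0 : a 0 ≠ 0 := hadm.2.2
    have hdenA : (0:ℝ) < (a 0)^2 * (h 0)^2 :=
      mul_pos ((sq_nonneg (a 0)).lt_of_ne (Ne.symm (pow_ne_zero 2 ha0))) hden
    obtain ⟨E, A, hE0, hA0, hq1, hq2⟩ :
        ∃ E A : ℝ, 0 ≤ E ∧ 0 ≤ A ∧
          rayleighQ R 3 lam h a = (E + lam*A)/((a 0)^2*(h 0)^2) ∧
          rayleighQ R 3 lam' h a = (E + lam'*A)/((a 0)^2*(h 0)^2) := by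
      refine ⟨∫ r in (0:ℝ)..R, (deriv a r)^2 * (h r)^2, ∫ r in (0:ℝ)..R, (a r)^2,
        intervalIntegral.integral_nonneg hR.le (fun u _ => by positivity),
        intervalIntegral.integral_nonneg hR.le (fun u _ => by positivity), ?_, ?_⟩
      · rw [rayleighQ_three, rayleigh_decomp hR hcont hC hKa lam]
      · rw [rayleighQ_three, rayleigh_decomp hR hcont hC hKa lam']
    set q := A / ((a 0)^2*(h 0)^2) with hqdef
    have hq0 : 0 ≤ q := div_nonneg hA0 hdenA.le
    have hlow : (E + lam*A)/((a 0)^2*(h 0)^2) < sInf S + ε := by rw [← hq1]; exact hvlt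
    have hAle : lam*q ≤ (E + lam*A)/((a 0)^2*(h 0)^2) := by
      have h1 : (E + lam*A)/((a 0)^2*(h 0)^2) = E/((a 0)^2*(h 0)^2) + lam*q := by
        rw [hqdef, add_div, mul_div_assoc]
      have h2 : 0 ≤ E/((a 0)^2*(h 0)^2) := div_nonneg hE0 hdenA.le
      linarith only [h1, h2]
    have hqlt : lam*q < sInf S + ε := lt_of_le_of_lt hAle hlow
    have hup : sInf S' ≤ (E + lam'*A)/((a 0)^2*(h 0)^2) := by
      rw [← hq2]
      exact csInf_le hbdd' ⟨a, hadm, rfl⟩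
    have hsplit : (E + lam'*A)/((a 0)^2*(h 0)^2)
        = (E + lam*A)/((a 0)^2*(h 0)^2) + (lam' - lam)*q := by
      have h1 : E + lam'*A = (E + lam*A) + (lam' - lam)*A := by ring
      rw [h1, add_div, hqdef, mul_div_assoc]
    have hfinal : sInf S' < sInf S + ε + (lam' - lam)*q := by
      rw [hsplit] at hup
      linarith only [hup, hlow]
    -- final arithmetic
    have m1 : (lam' - lam)*(lam*q) ≤ (lam' - lam)*(sInf S + ε) :=
      mul_le_mul_of_nonneg_left hqlt.le hΔpos.le
    have m2 : lam*(sInf S') < lam*(sInf S + ε + (lam' - lam)*q) :=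
      mul_lt_mul_of_pos_left hfinal hlampos
    have m3 : (lam' - lam)*(sInf S) < (lam' - lam)*G := mul_lt_mul_of_pos_left key hΔpos
    have m4 : (lam' - lam)*β = (lam' - lam)*G - (lam' - lam)*(sInf S) := by
      rw [hβdef]
      ring
    have hεe : 2*lam'*ε = (lam' - lam)*β := by
      rw [hεdef]
      field_simp
    have hGoalEq : lam*(R*(lam' - lam)/(h 0)^2) = (lam' - lam)*G := by
      rw [hGdef]
      ring
    have bigT : lam*(sInf S' - sInf S) < lam*(R*(lam' - lam)/(h 0)^2) := by
      rw [hGoalEq]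
      nlinarith [m1, m2, m3, m4, hεe]
    have := lt_of_mul_lt_mul_left bigT hlampos.le
    rw [hσeq, hσeq']
    linarith only [this]
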